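/- arXiv:0911.5103 — 4 statements merged into one kernel-verified Lean document; each statement's English description precedes it below -/
import Mathlib

section
/- Let p be a prime, X a finite group, P a Sylow p-subgroup of X, and R a subgroup of P which is not weakly closed in P with respect to X. Then there exists x ∈ X such that R ≠ R^x, R normalizes R^x, and R^x normalizes R. -/
/-- The conjugate `R^x = x⁻¹ R x` of a subgroup (written here with `MulAut.conj x⁻¹`,
i.e. the image of `R` under `g ↦ x⁻¹ * g * x`). -/
def conjSubgroup {X : Type*} [Group X] (x : X) (R : Subgroup X) : Subgroup X :=
  R.map (MulAut.conj x⁻¹).toMonoidHom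

section Aux

variable {X : Type*} [Group X]

lemma mem_conjSubgroup_iff {x g : X} {R : Subgroup X} :
    g ∈ conjSubgroup x R ↔ x * g * x⁻¹ ∈ R := by
  constructor
  · rintro ⟨r, hr, rfl⟩
    simpa [MulAut.conj_apply, mul_assoc] using hr
  · intro h
    refine ⟨x * g * x⁻¹, h, ?_⟩
    simp [MulAut.conj_apply]
    group

lemma conjSubgroup_conjSubgroup (x y : X) (R : Subgroup X) :
    conjSubgroup y (conjSubgroup x R) = conjSubgroup (x * y) R := by
  ext g
  simp only [mem_conjSubgroup_iff, mul_inv_rev]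
  constructor <;> intro h <;> [skip; skip] <;> · convert h using 1 <;> group

lemma conjSubgroup_one (R : Subgroup X) : conjSubgroup 1 R = R := by
  ext g; simp [mem_conjSubgroup_iff]

lemma conjSubgroup_mono (x : X) {R S : Subgroup X} (h : R ≤ S) :
    conjSubgroup x R ≤ conjSubgroup x S :=
  Subgroup.map_mono h

lemma conjSubgroup_normalizer (x : X) (R : Subgroup X) :
    Subgroup.normalizer ((conjSubgroup x R : Subgroup X) : Set X) = conjSubgroup x (Subgroup.normalizer (R : Set X)) :=
  (Subgroup.map_equiv_normalizer_eq R (MulAut.conj x⁻¹ : X ≃* X)).symm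

lemma card_conjSubgroup (x : X) (R : Subgroup X) :
    Nat.card (conjSubgroup x R) = Nat.card R :=
  (Nat.card_congr (Subgroup.equivMapOfInjective R _
    (MulAut.conj x⁻¹ : X ≃* X).injective).toEquiv).symm

lemma conjSubgroup_eq_self_iff {x : X} {R : Subgroup X} :
    conjSubgroup x R = R ↔ x ∈ Subgroup.normalizer (R : Set X) := by
  simp only [SetLike.ext_iff, mem_conjSubgroup_iff, Subgroup.mem_normalizer_iff]
  exact ⟨fun h n => (h n).symm, fun h n => (h n).symm⟩

/-- In a finite `p`-group `K`, any proper subgroup `H < K` admits an element of `K`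
normalizing `H` but not in `H`. -/
lemma exists_mem_normalizer_of_lt {p : ℕ} [Fact p.Prime] [Finite X]
    {H K : Subgroup X} (hK : IsPGroup p K) (hHK : H < K) :
    ∃ w : X, w ∈ K ∧ w ∈ Subgroup.normalizer (H : Set X) ∧ w ∉ H := by
  have hnil : Group.IsNilpotent K := hK.isNilpotent
  have hnc : NormalizerCondition K := normalizerCondition_of_isNilpotent
  have hlt : H.subgroupOf K < ⊤ := by
    rcases SetLike.exists_of_lt hHK with ⟨k, hkK, hkH⟩
    refine lt_top_iff_ne_top.mpr fun h => hkH ?_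
    have : (⟨k, hkK⟩ : K) ∈ H.subgroupOf K := h ▸ Subgroup.mem_top _
    simpa [Subgroup.mem_subgroupOf] using this
  obtain ⟨w, hwmem, hwnot⟩ := SetLike.exists_of_lt (hnc _ hlt)
  have hiff := Subgroup.mem_normalizer_iff.mp hwmem
  refine ⟨(w : X), w.2, ?_, fun h => hwnot (by simpa [Subgroup.mem_subgroupOf] using h)⟩
  rw [Subgroup.mem_normalizer_iff]
  intro n
  constructor
  · intro hn
    have hnK : n ∈ K := hHK.le hn
    have := (hiff ⟨n, hnK⟩).mp (by simpa [Subgroup.mem_subgroupOf] using hn)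
    simpa [Subgroup.mem_subgroupOf] using this
  · intro hn
    have hmK : (w : X) * n * (w : X)⁻¹ ∈ K := hHK.le hn
    have hnK : n ∈ K := by
      have := K.mul_mem (K.mul_mem (K.inv_mem w.2) hmK) w.2
      have heq : (w : X)⁻¹ * ((w : X) * n * (w : X)⁻¹) * (w : X) = n := by group
      rwa [heq] at this
    have := (hiff ⟨n, hnK⟩).mpr (by simpa [Subgroup.mem_subgroupOf] using hn)
    simpa [Subgroup.mem_subgroupOf] using this

end Aux

/-- Let `p` be a prime, `X` a finite group, `P` a Sylow `p`-subgroup of `X`,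
and `R ≤ P` not weakly closed in `P` with respect to `X`.  Then there is `x ∈ X` with
`R ≠ R^x` such that `R` and `R^x` normalize each other. -/
theorem not_weakly_closed_normalize {p : ℕ} [Fact p.Prime] {X : Type*} [Group X] [Finite X]
    (P : Sylow p X) (R : Subgroup X) (hRP : R ≤ (P : Subgroup X))
    (hnwc : ¬ ∀ x : X, conjSubgroup x R ≤ (P : Subgroup X) → conjSubgroup x R = R) :
    ∃ x : X, R ≠ conjSubgroup x R ∧ conjSubgroup x R ≤ Subgroup.normalizer (R : Set X) ∧
      R ≤ Subgroup.normalizer ((conjSubgroup x R : Subgroup X) : Set X) := by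
  classical
  push_neg at hnwc
  obtain ⟨x₀, hx₀P, hx₀ne⟩ := hnwc
  let Pred : X → X → Prop := fun a b =>
    conjSubgroup a R ≠ conjSubgroup b R ∧ IsPGroup p ↥(conjSubgroup a R ⊔ conjSubgroup b R)
  have hR1 : conjSubgroup (1 : X) R = R := conjSubgroup_one R
  have hne0 : Pred x₀ 1 := by
    refine ⟨by rw [hR1]; exact fun h => hx₀ne h, ?_⟩
    exact P.isPGroup'.to_le (sup_le hx₀P (by rw [hR1]; exact hRP))
  let Sset : Set ℕ :=
    {n | ∃ a b, Pred a b ∧ Nat.card ↥(conjSubgroup a R ⊔ conjSubgroup b R) = n}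
  have hSne : Sset.Nonempty := ⟨_, x₀, 1, hne0, rfl⟩
  have key : ∀ a b : X, Pred a b →
      Nat.card ↥(conjSubgroup a R ⊔ conjSubgroup b R) = sInf Sset →
      conjSubgroup a R ⊔ conjSubgroup b R ≤ Subgroup.normalizer ((conjSubgroup a R : Subgroup X) : Set X) := by
    rintro a b ⟨hne, hpW⟩ hcard
    by_contra hcon
    set S := conjSubgroup a R with hS
    set W := conjSubgroup a R ⊔ conjSubgroup b R with hWdef
    have hSW : S ≤ W := le_sup_left
    set N := Subgroup.normalizer (S : Set X) ⊓ W with hNdef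
    have hSN : S ≤ N := le_inf Subgroup.le_normalizer hSW
    have hNW : N < W := lt_of_le_of_ne inf_le_right fun h => hcon (h ▸ inf_le_left)
    obtain ⟨w, hwW, hwNnorm, hwN⟩ := exists_mem_normalizer_of_lt hpW hNW
    have hS' : conjSubgroup w S = conjSubgroup (a * w) R := conjSubgroup_conjSubgroup a w R
    have hS'N : conjSubgroup w S ≤ N := by
      intro g hg
      rw [mem_conjSubgroup_iff] at hg
      have h1 : w * g * w⁻¹ ∈ N := hSN hg
      have h2 := Subgroup.mem_normalizer_iff.mp ((Subgroup.normalizer (N : Set X)).inv_mem hwNnorm)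
      have h3 := (h2 (w * g * w⁻¹)).mp h1
      have heq : w⁻¹ * (w * g * w⁻¹) * w⁻¹⁻¹ = g := by group
      rwa [heq] at h3
    have hS'ne : conjSubgroup w S ≠ S := by
      intro h
      exact hwN ⟨conjSubgroup_eq_self_iff.mp h, hwW⟩
    have hsup : conjSubgroup (a * w) R ⊔ conjSubgroup a R ≤ N :=
      sup_le (hS' ▸ hS'N) hSN
    have hpW' : IsPGroup p ↥(conjSubgroup (a * w) R ⊔ conjSubgroup a R) :=
      hpW.to_le (hsup.trans inf_le_right)
    have hPred' : Pred (a * w) a := ⟨by rw [← hS']; exact hS'ne, hpW'⟩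
    have hmem : Nat.card ↥(conjSubgroup (a * w) R ⊔ conjSubgroup a R) ∈ Sset :=
      ⟨a * w, a, hPred', rfl⟩
    have hle := Nat.sInf_le hmem
    have h1 : Nat.card ↥(conjSubgroup (a * w) R ⊔ conjSubgroup a R) ≤ Nat.card ↥N :=
      Subgroup.card_le_of_le hsup
    have h2 : Nat.card ↥N < Nat.card ↥W := by
      refine lt_of_le_of_ne (Subgroup.card_le_of_le hNW.le) fun h => hNW.ne ?_
      exact Subgroup.eq_of_le_of_card_ge hNW.le (le_of_eq h.symm)
    omega
  obtain ⟨a, b, hP2, hcard⟩ := Nat.sInf_mem hSne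
  have hsupcomm : conjSubgroup b R ⊔ conjSubgroup a R = conjSubgroup a R ⊔ conjSubgroup b R :=
    sup_comm _ _
  have hPba : Pred b a := ⟨hP2.1.symm, by rw [hsupcomm]; exact hP2.2⟩
  have hWab := key a b hP2 hcard
  have hWba := key b a hPba (by rw [hsupcomm]; exact hcard)
  have hTnS : conjSubgroup b R ≤ Subgroup.normalizer ((conjSubgroup a R : Subgroup X) : Set X) := le_sup_right.trans hWab
  have hSnT : conjSubgroup a R ≤ Subgroup.normalizer ((conjSubgroup b R : Subgroup X) : Set X) := le_sup_right.trans hWba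
  have hRa : conjSubgroup a⁻¹ (conjSubgroup a R) = R := by
    rw [conjSubgroup_conjSubgroup, mul_inv_cancel, conjSubgroup_one]
  have hRb : conjSubgroup a⁻¹ (conjSubgroup b R) = conjSubgroup (b * a⁻¹) R :=
    conjSubgroup_conjSubgroup b a⁻¹ R
  refine ⟨b * a⁻¹, ?_, ?_, ?_⟩
  · intro h
    apply hP2.1
    have := congrArg (conjSubgroup a) h
    rw [conjSubgroup_conjSubgroup (b * a⁻¹) a R, inv_mul_cancel_right] at this
    exact this
  · calc conjSubgroup (b * a⁻¹) R = conjSubgroup a⁻¹ (conjSubgroup b R) := hRb.symm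
      _ ≤ conjSubgroup a⁻¹ (Subgroup.normalizer ((conjSubgroup a R : Subgroup X) : Set X)) := conjSubgroup_mono _ hTnS
      _ = Subgroup.normalizer ((conjSubgroup a⁻¹ (conjSubgroup a R) : Subgroup X) : Set X) :=
          (conjSubgroup_normalizer _ _).symm
      _ = Subgroup.normalizer (R : Set X) := by rw [hRa]
  · calc R = conjSubgroup a⁻¹ (conjSubgroup a R) := hRa.symm
      _ ≤ conjSubgroup a⁻¹ (Subgroup.normalizer ((conjSubgroup b R : Subgroup X) : Set X)) := conjSubgroup_mono _ hSnT
      _ = Subgroup.normalizer ((conjSubgroup a⁻¹ (conjSubgroup b R) : Subgroup X) : Set X) :=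
          (conjSubgroup_normalizer _ _).symm
      _ = Subgroup.normalizer ((conjSubgroup (b * a⁻¹) R : Subgroup X) : Set X) := by rw [hRb]
end

section
/- Let p be a prime, Q an extraspecial p-group, A a maximal abelian subgroup of Q (i.e., A is abelian and is not properly contained in any abelian subgroup of Q), and α an automorphism of Q which fixes every element of A. Then the order of α is a power of p. -/
/-- A finite `p`-group is *extraspecial* if its center, derived subgroup and Frattini
subgroup coincide and have order `p`.  (Given that the derived subgroup equals the center
and has order `p`, the Frattini subgroup equals the center precisely when every `p`-th
power is central.) -/
def IsExtraspecial (p : ℕ) (P : Type*) [Group P] : Prop :=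
  IsPGroup p P ∧ Nat.card (Subgroup.center P) = p ∧
    commutator P = Subgroup.center P ∧ ∀ x : P, x ^ p ∈ Subgroup.center P

/-- Let `Q` be an extraspecial `p`-group, `A` a maximal abelian subgroup
of `Q`, and `α` an automorphism of `Q` fixing every element of `A`.  Then the order of `α`
is a power of `p`. -/
theorem extraspecial_aut_fixing_maximal_abelian_is_p_element
    {p : ℕ} [Fact p.Prime] {Q : Type*} [Group Q] [Finite Q]
    (hQ : IsExtraspecial p Q) (A : Subgroup Q)
    (hA : ∀ x ∈ A, ∀ y ∈ A, x * y = y * x)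
    (hAmax : ∀ B : Subgroup Q, (∀ x ∈ B, ∀ y ∈ B, x * y = y * x) → A ≤ B → B = A)
    (α : MulAut Q) (hα : ∀ a ∈ A, α a = a) :
    ∃ n : ℕ, orderOf α = p ^ n := by
  obtain ⟨hpQ, hcard, hcomm, hpow⟩ := hQ
  -- every element of Q has order dividing p^2
  have hexp : ∀ g : Q, g ^ (p ^ 2) = 1 := by
    intro g
    have h1 : (⟨g ^ p, hpow g⟩ : Subgroup.center Q) ^ Nat.card (Subgroup.center Q) = 1 :=
      pow_card_eq_one'
    rw [hcard] at h1
    have h2 : (g ^ p) ^ p = 1 := by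
      simpa using congrArg (Subtype.val) h1
    rw [pow_two, pow_mul]; exact h2
  -- anything commuting with all of A is in A
  have hmem : ∀ c : Q, (∀ a ∈ A, c * a = a * c) → c ∈ A := by
    intro c hc
    set S : Set Q := (A : Set Q) ∪ {c} with hS
    have hScomm : ∀ x ∈ S, ∀ y ∈ S, x * y = y * x := by
      rintro x (hx | rfl) y (hy | rfl)
      · exact hA x hx y hy
      · exact (hc x hx).symm
      · exact hc y hy
      · rfl
    have h1 : Subgroup.closure S ≤ Subgroup.centralizer S :=
      (Subgroup.closure_le _).2 fun x hx =>
        Subgroup.mem_centralizer_iff.2 fun y hy => hScomm y hy x hx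
    have hBcomm : ∀ x ∈ Subgroup.closure S, ∀ y ∈ Subgroup.closure S, x * y = y * x := by
      intro x hx y hy
      have hx' := h1 hx
      have h2 : Subgroup.closure S ≤ Subgroup.centralizer {x} :=
        (Subgroup.closure_le _).2 fun s hs =>
          Subgroup.mem_centralizer_iff.2 fun h hh => by
            rw [Set.mem_singleton_iff] at hh; subst hh
            exact (Subgroup.mem_centralizer_iff.1 hx' s hs).symm
      have := Subgroup.mem_centralizer_iff.1 (h2 hy) x rfl
      exact this
    have hAle : A ≤ Subgroup.closure S := fun x hx =>
      Subgroup.subset_closure (Or.inl hx)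
    have hBA := hAmax _ hBcomm hAle
    have : c ∈ Subgroup.closure S := Subgroup.subset_closure (Or.inr rfl)
    rwa [hBA] at this
  -- center ≤ A
  have hZA : Subgroup.center Q ≤ A := fun z hz =>
    hmem z fun a _ => (Subgroup.mem_center_iff.1 hz a).symm
  -- A is "normal enough": conjugates of elements of A stay in A
  have hnorm : ∀ (x : Q), ∀ a ∈ A, x * a * x⁻¹ ∈ A := by
    intro x a ha
    open scoped commutatorElement in
    have hc : ⁅x, a⁆ ∈ commutator Q :=
      Subgroup.commutator_mem_commutator (Subgroup.mem_top x) (Subgroup.mem_top a)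
    rw [hcomm] at hc
    open scoped commutatorElement in
    have : x * a * x⁻¹ = ⁅x, a⁆ * a := by group
    rw [this]
    exact A.mul_mem (hZA hc) ha
  -- the defect x⁻¹ * α x lies in A
  have hdef : ∀ x : Q, x⁻¹ * α x ∈ A := by
    intro x
    apply hmem
    intro a ha
    have h1 : α (x * a * x⁻¹) = x * a * x⁻¹ := hα _ (hnorm x a ha)
    have h2 : α (x * a * x⁻¹) = α x * a * (α x)⁻¹ := by
      rw [map_mul, map_mul, map_inv, hα a ha]
    have h3 : α x * a * (α x)⁻¹ = x * a * x⁻¹ := h2 ▸ h1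
    calc (x⁻¹ * α x) * a = x⁻¹ * (α x * a * (α x)⁻¹) * α x := by group
      _ = x⁻¹ * (x * a * x⁻¹) * α x := by rw [h3]
      _ = a * (x⁻¹ * α x) := by group
  -- iterate: (α ^ n) x = x * (x⁻¹ * α x) ^ n
  have hiter : ∀ (n : ℕ) (x : Q), (α ^ n) x = x * (x⁻¹ * α x) ^ n := by
    intro n x
    induction n with
    | zero => simp
    | succ n ih =>
      rw [pow_succ', MulAut.mul_apply, ih, map_mul,
        map_pow, hα _ (hdef x), pow_succ' _ n,
        mul_assoc x⁻¹ (α x), ← mul_assoc x x⁻¹, mul_inv_cancel, one_mul]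
  have hord : α ^ (p ^ 2) = 1 := by
    ext x
    rw [hiter, hexp, mul_one]; rfl
  have hdvd : orderOf α ∣ p ^ 2 := orderOf_dvd_of_pow_eq_one hord
  obtain ⟨n, _, hn⟩ := (Nat.dvd_prime_pow (Fact.out : p.Prime)).1 hdvd
  exact ⟨n, hn⟩
end

section
/- Let F be a field, V a finite-dimensional vector space over F, and q a quadratic form on V such that the associated bilinear form f, defined by f(v,w) = q(v+w) − q(v) − q(w), is nondegenerate, and such that q has Witt index at least 1, i.e., there exists a nonzero vector v with q(v) = 0. Suppose g ∈ GL(V) stabilizes the set of singular one-dimensional subspaces of V, i.e., for every nonzero v ∈ V one has q(v) = 0 if and only if q(gv) = 0. Then g preserves q up to similarity: there exists a nonzero scalar λ ∈ F such that q(gv) = λ·q(v) for all v ∈ V. -/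
open QuadraticMap

/-- Let `F` be a field, `V` a finite-dimensional `F`-vector space and `q`
a quadratic form on `V` whose associated bilinear form `f(v,w) = q(v+w) - q v - q w` is
nondegenerate, and which has Witt index at least `1` (there is a nonzero singular vector).
If `g ∈ GL(V)` stabilizes the set of singular one-dimensional subspaces (equivalently,
for nonzero `v`, `q v = 0 ↔ q (g v) = 0`), then `g` preserves `q` up to similarity:
there is a nonzero scalar `λ` with `q (g v) = λ * q v` for all `v`. -/
theorem stabilizer_of_singular_points_preserves_form_up_to_similarity
    {F V : Type*} [Field F] [AddCommGroup V] [Module F V] [FiniteDimensional F V]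
    (q : QuadraticForm F V)
    (hnd : ∀ v : V, (∀ w : V, q (v + w) - q v - q w = 0) → v = 0)
    (hwitt : ∃ v : V, v ≠ 0 ∧ q v = 0)
    (g : (V →ₗ[F] V)ˣ)
    (hg : ∀ v : V, v ≠ 0 → (q v = 0 ↔ q (g.val v) = 0)) :
    ∃ lam : F, lam ≠ 0 ∧ ∀ v : V, q (g.val v) = lam * q v := by
  classical
  obtain ⟨u, hune, hu⟩ := hwitt
  -- general expansion lemmas
  have hpol : ∀ x y : V, q (x + y) = q x + q y + polar (⇑q) x y :=
    fun x y => QuadraticMap.map_add (⇑q) x y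
  -- a vector not orthogonal to u
  obtain ⟨w₁, hw₁⟩ : ∃ w₁ : V, polar (⇑q) u w₁ ≠ 0 := by
    by_contra h
    push_neg at h
    exact hune (hnd u h)
  set e : F := polar (⇑q) u w₁ with he
  have he0 : e ≠ 0 := hw₁
  -- build a hyperbolic pair (u, w)
  set w : V := e⁻¹ • (w₁ + (-(q w₁ / e)) • u) with hwdef
  have hqself : polar (⇑q) u u = 0 := by
    rw [polar_self]
    rw [hu]; simp
  have hqw : q w = 0 := by
    rw [hwdef, QuadraticMap.map_smul]
    have : q (w₁ + (-(q w₁ / e)) • u) = 0 := by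
      rw [hpol, QuadraticMap.map_smul, polar_smul_right, hu, polar_comm]
      rw [← he]
      simp only [smul_eq_mul]
      field_simp
      ring
    rw [this]; simp
  have huw : polar (⇑q) u w = 1 := by
    rw [hwdef, polar_smul_right, polar_add_right, polar_smul_right, hqself, ← he]
    simp only [smul_eq_mul]
    field_simp
    ring
  have hwne : w ≠ 0 := by
    intro h
    rw [h, polar_zero_right] at huw
    exact one_ne_zero huw.symm
  -- the transported quadratic form
  set Q' : QuadraticForm F V := q.comp g.val with hQ'def
  have hQ'app : ∀ x : V, Q' x = q (g.val x) := fun x => rfl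
  have hg' : ∀ v : V, v ≠ 0 → (q v = 0 ↔ Q' v = 0) := by
    intro v hv; rw [hQ'app]; exact hg v hv
  have hpol' : ∀ x y : V, Q' (x + y) = Q' x + Q' y + polar (⇑Q') x y :=
    fun x y => QuadraticMap.map_add (⇑Q') x y
  have hQ'u : Q' u = 0 := (hg' u hune).mp hu
  have hQ'w : Q' w = 0 := (hg' w hwne).mp hqw
  set lam : F := polar (⇑Q') u w with hlam
  -- lam ≠ 0
  have huwne : u + w ≠ 0 := by
    intro h
    have hw' : w = -u := by
      rw [eq_neg_iff_add_eq_zero, add_comm]; exact h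
    rw [hw', polar_neg_right, hqself, neg_zero] at huw
    exact one_ne_zero huw.symm
  have hquw : q (u + w) = 1 := by
    rw [hpol, hu, hqw, huw]; ring
  have hQ'uw : Q' (u + w) = lam := by
    rw [hpol', hQ'u, hQ'w, hlam]; ring
  have hlam0 : lam ≠ 0 := by
    intro h0
    have : q (u + w) = 0 := by
      refine (hg' _ huwne).mpr ?_
      rw [hQ'uw, h0]
    rw [hquw] at this
    exact one_ne_zero this
  -- the key lemma: on the orthogonal complement of the hyperbolic plane
  have key : ∀ v₀ : V, polar (⇑q) v₀ u = 0 → polar (⇑q) v₀ w = 0 →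
      polar (⇑Q') v₀ u = 0 ∧ polar (⇑Q') v₀ w = 0 ∧ Q' v₀ = lam * q v₀ := by
    intro v₀ hA hB
    by_cases h0 : v₀ = 0
    · subst h0
      simp [polar_zero_left]
    by_cases hd : q v₀ = 0
    · -- v₀ singular
      have hQ'v₀ : Q' v₀ = 0 := (hg' v₀ h0).mp hd
      have hxu : v₀ + u ≠ 0 := by
        intro h
        have hu' : u = -v₀ := by
          rw [eq_neg_iff_add_eq_zero, add_comm]; exact h
        rw [hu', polar_neg_left, hB, neg_zero] at huw
        exact one_ne_zero huw.symm
      have hA' : polar (⇑Q') v₀ u = 0 := by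
        have hqx : q (v₀ + u) = 0 := by rw [hpol, hd, hu, hA]; ring
        have := (hg' _ hxu).mp hqx
        rw [hpol', hQ'v₀, hQ'u] at this
        simpa using this
      have hxw : v₀ + w ≠ 0 := by
        intro h
        have hw' : w = -v₀ := by
          rw [eq_neg_iff_add_eq_zero, add_comm]; exact h
        rw [hw', polar_neg_right, polar_comm, hA, neg_zero] at huw
        exact one_ne_zero huw.symm
      have hB' : polar (⇑Q') v₀ w = 0 := by
        have hqx : q (v₀ + w) = 0 := by rw [hpol, hd, hqw, hB]; ring
        have := (hg' _ hxw).mp hqx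
        rw [hpol', hQ'v₀, hQ'w] at this
        simpa using this
      exact ⟨hA', hB', by rw [hQ'v₀, hd, mul_zero]⟩
    · -- q v₀ = d ≠ 0
      have hA' : polar (⇑Q') v₀ u = 0 := by
        by_contra hA0
        set s : F := -(Q' v₀) / (polar (⇑Q') v₀ u) with hs
        have hxne : v₀ + s • u ≠ 0 := by
          intro h
          have : v₀ = (-s) • u := by
            rw [neg_smul, eq_neg_iff_add_eq_zero]; exact h
          rw [this, QuadraticMap.map_smul, hu] at hd
          simp at hd
        have hQ'x : Q' (v₀ + s • u) = 0 := by
          rw [hpol', QuadraticMap.map_smul, polar_smul_right, hQ'u, hs]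
          simp only [smul_eq_mul]
          field_simp
          ring
        have hqx : q (v₀ + s • u) = 0 := (hg' _ hxne).mpr hQ'x
        rw [hpol, QuadraticMap.map_smul, polar_smul_right, hu, hA] at hqx
        simp at hqx
        exact hd hqx
      have hB' : polar (⇑Q') v₀ w = 0 := by
        by_contra hB0
        set s : F := -(Q' v₀) / (polar (⇑Q') v₀ w) with hs
        have hxne : v₀ + s • w ≠ 0 := by
          intro h
          have : v₀ = (-s) • w := by
            rw [neg_smul, eq_neg_iff_add_eq_zero]; exact h
          rw [this, QuadraticMap.map_smul, hqw] at hd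
          simp at hd
        have hQ'x : Q' (v₀ + s • w) = 0 := by
          rw [hpol', QuadraticMap.map_smul, polar_smul_right, hQ'w, hs]
          simp only [smul_eq_mul]
          field_simp
          ring
        have hqx : q (v₀ + s • w) = 0 := (hg' _ hxne).mpr hQ'x
        rw [hpol, QuadraticMap.map_smul, polar_smul_right, hqw, hB] at hqx
        simp at hqx
        exact hd hqx
      -- now use the singular vector v₀ + u + (-(q v₀)) • w
      set y : V := u + (-(q v₀)) • w with hy
      have hqy : q y = -(q v₀) := by
        rw [hy, hpol, QuadraticMap.map_smul, polar_smul_right, hu, hqw, huw]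
        simp only [smul_eq_mul, smul_zero, mul_one, mul_zero, zero_add, add_zero]
      have hpy : polar (⇑q) v₀ y = 0 := by
        rw [hy, polar_add_right, polar_smul_right, hA, hB]
        simp
      have hqx : q (v₀ + y) = 0 := by
        rw [hpol, hqy, hpy]; ring
      have hxne : v₀ + y ≠ 0 := by
        intro h
        have h1 : polar (⇑q) (v₀ + y) w = 1 := by
          rw [polar_add_left, hB, hy, polar_add_left, polar_smul_left, huw]
          rw [polar_self, hqw]
          simp
        rw [h, polar_zero_left] at h1
        exact one_ne_zero h1.symm
      have hQ'x : Q' (v₀ + y) = 0 := (hg' _ hxne).mp hqx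
      have hQ'y : Q' y = -(q v₀) * lam := by
        rw [hy, hpol', QuadraticMap.map_smul, polar_smul_right, hQ'u, hQ'w, ← hlam]
        simp only [smul_eq_mul, smul_zero, mul_zero, zero_add, add_zero]
      have hpy' : polar (⇑Q') v₀ y = 0 := by
        rw [hy, polar_add_right, polar_smul_right, hA', hB']
        simp
      rw [hpol', hQ'y, hpy'] at hQ'x
      exact ⟨hA', hB', by linear_combination hQ'x⟩
  -- conclusion
  refine ⟨lam, hlam0, ?_⟩
  intro v
  set α : F := polar (⇑q) v w with hα
  set β : F := polar (⇑q) v u with hβ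
  set y : V := α • u + β • w with hy
  set v₀ : V := v - y with hv₀
  have hv : v = v₀ + y := by rw [hv₀]; abel
  have hA : polar (⇑q) v₀ u = 0 := by
    rw [hv₀, polar_sub_left, hy, polar_add_left, polar_smul_left, polar_smul_left,
      hqself, polar_comm (⇑q) w u, huw, ← hβ]
    simp
  have hB : polar (⇑q) v₀ w = 0 := by
    have hwself : polar (⇑q) w w = 0 := by
      rw [polar_self, hqw]; simp
    rw [hv₀, polar_sub_left, hy, polar_add_left, polar_smul_left, polar_smul_left,
      huw, hwself, ← hα]
    simp
  obtain ⟨hA', hB', hcv₀⟩ := key v₀ hA hB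
  have hqy : q y = α * β := by
    rw [hy, hpol, QuadraticMap.map_smul, QuadraticMap.map_smul, polar_smul_left,
      polar_smul_right, hu, hqw, huw]
    simp only [smul_eq_mul, smul_zero, mul_zero, mul_one, zero_add, add_zero]
  have hqv : q v = q v₀ + α * β := by
    rw [hv, hpol, hqy, polar_add_right, polar_smul_right, polar_smul_right, hA, hB]
    simp
  have hQ'y : Q' y = α * β * lam := by
    rw [hy, hpol', QuadraticMap.map_smul, QuadraticMap.map_smul, polar_smul_left,
      polar_smul_right, hQ'u, hQ'w, ← hlam]
    simp only [smul_eq_mul, smul_zero, mul_zero, zero_add, add_zero]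
    ring
  have hQ'v : Q' v = lam * q v := by
    rw [hqv, hv, hpol', hQ'y, polar_add_right, polar_smul_right, polar_smul_right, hA', hB',
      hcv₀]
    simp only [smul_eq_mul, mul_zero, add_zero]
    ring
  rw [← hQ'app]
  exact hQ'v
end

section
/- Let p be an odd prime and V a 4-dimensional vector space over GF(p). Let a, b ∈ GL(V) be commuting elements such that the subgroup A = ⟨a,b⟩ is elementary abelian of order p². Assume that [V,a] = C_V(b) and [V,b] = C_V(a), that these two subspaces are distinct, and that both are 2-dimensional. Let v ∈ V \ [V,A], where [V,A] = [V,a] + [V,b]. Then there exists a quadratic form q on V, with nondegenerate associated bilinear form, which is invariant under both a and b, such that q(v) = 0 and q vanishes on the one-dimensional subspace C_V(A) = C_V(a) ∩ C_V(b). -/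
open Module LinearMap

private lemma aux_cube {K V : Type*} [Field K] [AddCommGroup V] [Module K V]
    [FiniteDimensional K V] (hdim : finrank K V = 4)
    {p : ℕ} (hp : 2 ≤ p) (e f : Module.End K V)
    (hef : LinearMap.range e = LinearMap.ker f)
    (hfe : LinearMap.range f = LinearMap.ker e)
    (hne : LinearMap.range e ≠ LinearMap.range f)
    (hda : finrank K (LinearMap.range e) = 2)
    (hdb : finrank K (LinearMap.range f) = 2)
    (hS : finrank K (LinearMap.range e ⊔ LinearMap.range f : Submodule K V) = 3)
    (z₀ : V) (hz₀ : z₀ ≠ 0) (hz₀e : e z₀ = 0) (hz₀f : f z₀ = 0)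
    (hep : e ^ p = 0) :
    e * e * e = 0 ∧ LinearMap.ker (e * e) = LinearMap.range e ⊔ LinearMap.range f := by
  have hkf2 : finrank K (LinearMap.ker f) = 2 := by rw [← hef]; exact hda
  -- rank of e∘e is at most 1
  have hr2 : LinearMap.range (e * e) = Submodule.map e (LinearMap.ker f) := by
    rw [Module.End.mul_eq_comp, LinearMap.range_comp, hef]
  have hr2le : finrank K (LinearMap.range (e * e)) ≤ 1 := by
    have hd := LinearMap.finrank_range_add_finrank_ker (e.domRestrict (LinearMap.ker f))
    have hrd : LinearMap.range (e.domRestrict (LinearMap.ker f))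
        = Submodule.map e (LinearMap.ker f) := LinearMap.range_domRestrict _ _
    have hkd : 0 < finrank K (LinearMap.ker (e.domRestrict (LinearMap.ker f))) := by
      rw [Module.finrank_pos_iff_exists_ne_zero]
      refine ⟨⟨⟨z₀, by simpa [LinearMap.mem_ker] using hz₀f⟩, by
        simpa [LinearMap.mem_ker, LinearMap.domRestrict_apply] using hz₀e⟩, ?_⟩
      intro h
      apply hz₀
      have := congrArg (fun t => ((t : LinearMap.ker (e.domRestrict (LinearMap.ker f))) :
        LinearMap.ker f)) h
      exact congrArg Subtype.val this
    rw [hrd] at hd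
    rw [hr2]
    omega
  -- cube is zero
  have key : LinearMap.range (e * e * e) = ⊥ := by
    by_contra h3
    obtain ⟨x3, hx3mem, hx3⟩ := Submodule.ne_bot_iff _ |>.mp h3
    have h3pos : 0 < finrank K (LinearMap.range (e * e * e)) := by
      rw [Module.finrank_pos_iff_exists_ne_zero]
      exact ⟨⟨x3, hx3mem⟩, fun h => hx3 (congrArg Subtype.val h)⟩
    have hr3le : LinearMap.range (e * e * e) ≤ LinearMap.range (e * e) := by
      rw [show e * e * e = (e * e).comp e from rfl, LinearMap.range_comp]
      exact LinearMap.map_le_range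
    have heq : LinearMap.range (e * e * e) = LinearMap.range (e * e) :=
      Submodule.eq_of_le_of_finrank_le hr3le (by omega)
    have hpow : ∀ n : ℕ, LinearMap.range (e ^ (n + 2)) = LinearMap.range (e * e) := by
      intro n
      induction n with
      | zero => rw [pow_two]
      | succ n ih =>
        have h1 : e ^ (n + 1 + 2) = e * e ^ (n + 2) := by rw [← pow_succ']
        rw [h1, Module.End.mul_eq_comp, LinearMap.range_comp, ih, ← LinearMap.range_comp,
          ← Module.End.mul_eq_comp, ← mul_assoc, heq]
    have hfin := hpow (p - 2)
    rw [Nat.sub_add_cancel hp, hep] at hfin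
    exact h3 (by rw [heq, ← hfin, LinearMap.range_zero])
  have he3 : e * e * e = 0 := LinearMap.range_eq_bot.mp key
  refine ⟨he3, ?_⟩
  have hSle : LinearMap.range e ⊔ LinearMap.range f ≤ LinearMap.ker (e * e) := by
    refine sup_le ?_ ?_
    · intro x hx
      obtain ⟨u, rfl⟩ := LinearMap.mem_range.mp hx
      have : (e * e) (e u) = (e * e * e) u := rfl
      rw [LinearMap.mem_ker, this, he3, LinearMap.zero_apply]
    · intro x hx
      have hx' : e x = 0 := by
        rw [← LinearMap.mem_ker, ← hfe]; exact hx
      rw [LinearMap.mem_ker, Module.End.mul_apply, hx', map_zero]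
  have hee_ne : e * e ≠ 0 := by
    intro h0
    apply hne
    have hle : LinearMap.range e ≤ LinearMap.range f := by
      rw [hfe]
      intro x hx
      obtain ⟨u, rfl⟩ := LinearMap.mem_range.mp hx
      rw [LinearMap.mem_ker, ← Module.End.mul_apply, h0, LinearMap.zero_apply]
    exact Submodule.eq_of_le_of_finrank_le hle (by rw [hda, hdb])
  have hktop : LinearMap.ker (e * e) < ⊤ :=
    lt_top_iff_ne_top.mpr (fun h => hee_ne (LinearMap.ker_eq_top.mp h))
  have hklt : finrank K (LinearMap.ker (e * e)) < 4 := by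
    have := Submodule.finrank_lt_finrank_of_lt hktop
    rwa [finrank_top, hdim] at this
  exact (Submodule.eq_of_le_of_finrank_le hSle (by omega)).symm


/-- Let `p` be an odd prime and `V` a 4-dimensional vector space over
`GF(p)`.  Let `a, b ∈ GL(V)` commute, generating an elementary abelian group `A` of order
`p²`, with `[V,a] = C_V(b)` and `[V,b] = C_V(a)` distinct of dimension `2`.  For any
`v ∈ V \ [V,A]` there is an `⟨a,b⟩`-invariant quadratic form on `V` with nondegenerate
associated bilinear form, for which `v` is singular and `C_V(A)` is a singular
one-space. -/
theorem exists_invariant_quadratic_form_GO4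
    {p : ℕ} [Fact p.Prime] (hodd : Odd p)
    (V : Type*) [AddCommGroup V] [Module (ZMod p) V] [FiniteDimensional (ZMod p) V]
    (hdim : finrank (ZMod p) V = 4)
    (a b : (V →ₗ[ZMod p] V)ˣ)
    (hcomm : Commute a b) (hap : a ^ p = 1) (hbp : b ^ p = 1)
    (hcard : Nat.card (Subgroup.closure {a, b} : Subgroup (V →ₗ[ZMod p] V)ˣ) = p ^ 2)
    (hab : LinearMap.range (a.val - 1) = LinearMap.ker (b.val - 1))
    (hba : LinearMap.range (b.val - 1) = LinearMap.ker (a.val - 1))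
    (hne : LinearMap.range (a.val - 1) ≠ LinearMap.range (b.val - 1))
    (hda : finrank (ZMod p) (LinearMap.range (a.val - 1)) = 2)
    (hdb : finrank (ZMod p) (LinearMap.range (b.val - 1)) = 2)
    (v : V) (hv : v ∉ LinearMap.range (a.val - 1) ⊔ LinearMap.range (b.val - 1)) :
    ∃ q : QuadraticForm (ZMod p) V,
      (∀ u : V, (∀ w : V, q (u + w) - q u - q w = 0) → u = 0) ∧
      (∀ u : V, q (a.val u) = q u) ∧ (∀ u : V, q (b.val u) = q u) ∧
      q v = 0 ∧
      (∀ w : V, w ∈ LinearMap.ker (a.val - 1) ⊓ LinearMap.ker (b.val - 1) → q w = 0) := by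
  have hp2 : 2 ≤ p := (Fact.out : p.Prime).two_le
  set e : V →ₗ[ZMod p] V := a.val - 1 with he
  set f : V →ₗ[ZMod p] V := b.val - 1 with hf
  haveI : Nontrivial V := Module.nontrivial_of_finrank_pos (R := ZMod p) (by omega)
  -- char p of the endomorphism ring
  haveI : CharP (Module.End (ZMod p) V) p :=
    charP_of_injective_algebraMap' (ZMod p) (A := Module.End (ZMod p) V) p
  have hep : e ^ p = 0 := by
    have hc : Commute (a.val) (1 : V →ₗ[ZMod p] V) := Commute.one_right _
    have := sub_pow_char_of_commute (R := Module.End (ZMod p) V) p hc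
    rw [he, this, one_pow, ← Units.val_pow_eq_pow_val, hap, Units.val_one, sub_self]
  have hfp : f ^ p = 0 := by
    have hc : Commute (b.val) (1 : V →ₗ[ZMod p] V) := Commute.one_right _
    have := sub_pow_char_of_commute (R := Module.End (ZMod p) V) p hc
    rw [hf, this, one_pow, ← Units.val_pow_eq_pow_val, hbp, Units.val_one, sub_self]
  -- dimensions
  have hSne : LinearMap.range e ⊔ LinearMap.range f ≠ ⊤ := by
    intro h; exact hv (h ▸ Submodule.mem_top)
  have hS3 : finrank (ZMod p) (LinearMap.range e ⊔ LinearMap.range f : Submodule (ZMod p) V) = 3 := by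
    have h1 : LinearMap.range e < LinearMap.range e ⊔ LinearMap.range f := by
      refine lt_of_le_of_ne le_sup_left (fun h => ?_)
      have h2 : LinearMap.range f ≤ LinearMap.range e := h ▸ le_sup_right
      exact hne (Submodule.eq_of_le_of_finrank_le h2 (by rw [hda, hdb])).symm
    have h3 := Submodule.finrank_lt_finrank_of_lt h1
    rw [hda] at h3
    have h4 := Submodule.finrank_lt_finrank_of_lt (lt_top_iff_ne_top.mpr hSne)
    rw [finrank_top, hdim] at h4
    omega
  have hI1 : finrank (ZMod p) (LinearMap.ker e ⊓ LinearMap.ker f : Submodule (ZMod p) V) = 1 := by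
    have heq : LinearMap.ker e ⊓ LinearMap.ker f = LinearMap.range f ⊓ LinearMap.range e := by
      rw [← hba, ← hab]
    have h5 := Submodule.finrank_sup_add_finrank_inf_eq (LinearMap.range f) (LinearMap.range e)
    rw [hdb, hda] at h5
    rw [sup_comm (LinearMap.range f) (LinearMap.range e), hS3] at h5
    rw [heq]; omega
  haveI : Nontrivial (LinearMap.ker e ⊓ LinearMap.ker f : Submodule (ZMod p) V) :=
    Module.nontrivial_of_finrank_pos (R := ZMod p) (by omega)
  obtain ⟨⟨z₀, hz₀mem⟩, hz₀ne⟩ := exists_ne (0 : (LinearMap.ker e ⊓ LinearMap.ker f : Submodule (ZMod p) V))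
  have hz₀ : z₀ ≠ 0 := fun h => hz₀ne (Subtype.ext h)
  have hz₀e : e z₀ = 0 := (Submodule.mem_inf.mp hz₀mem).1
  have hz₀f : f z₀ = 0 := (Submodule.mem_inf.mp hz₀mem).2
  obtain ⟨he3, hke⟩ := aux_cube hdim hp2 e f hab hba hne hda hdb hS3 z₀ hz₀ hz₀e hz₀f hep
  obtain ⟨hf3, hkf⟩ := aux_cube hdim hp2 f e hba hab (Ne.symm hne) hdb hda
    (by rwa [sup_comm (LinearMap.range e) (LinearMap.range f)] at hS3) z₀ hz₀ hz₀f hz₀e hfp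
  -- the vectors
  set x : V := e v with hxdef
  set y : V := f v with hydef
  set z : V := e x with hzdef
  have hzne : z ≠ 0 := by
    intro h
    apply hv
    rw [← hke, LinearMap.mem_ker]
    exact h
  have hffv : f (f v) ≠ 0 := by
    intro h
    apply hv
    rw [sup_comm, ← hkf, LinearMap.mem_ker]
    exact h
  have hex : e x = z := rfl
  have hey : e y = 0 := by
    have : y ∈ LinearMap.ker e := hba ▸ LinearMap.mem_range_self f v
    exact this
  have hez : e z = 0 := by
    have : e z = (e * e * e) v := rfl
    rw [this, he3, LinearMap.zero_apply]
  have hfx : f x = 0 := by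
    have : x ∈ LinearMap.ker f := hab ▸ LinearMap.mem_range_self e v
    exact this
  have hfz : f z = 0 := by
    have : z ∈ LinearMap.ker f := hab ▸ LinearMap.mem_range_self e x
    exact this
  -- span of z is the common kernel
  have hspan : Submodule.span (ZMod p) {z} = (LinearMap.ker e ⊓ LinearMap.ker f : Submodule (ZMod p) V) := by
    refine Submodule.eq_of_le_of_finrank_le ?_ ?_
    · rw [Submodule.span_le, Set.singleton_subset_iff]
      exact Submodule.mem_inf.mpr ⟨hez, hfz⟩
    · rw [hI1, finrank_span_singleton hzne]
  obtain ⟨lam, hlam⟩ : ∃ lam : ZMod p, lam • z = f y := by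
    rw [← Submodule.mem_span_singleton, hspan]
    refine Submodule.mem_inf.mpr ⟨?_, ?_⟩
    · have : f y ∈ LinearMap.ker e := hba ▸ LinearMap.mem_range_self f y
      exact this
    · have : f (f y) = (f * f * f) v := rfl
      rw [LinearMap.mem_ker, this, hf3, LinearMap.zero_apply]
  have hlam0 : lam ≠ 0 := by
    intro h
    rw [h, zero_smul] at hlam
    exact hffv hlam.symm
  have hfy : f y = lam • z := hlam.symm
  have hvx : e v = x := rfl
  have hvy : f v = y := rfl
  -- linear independence
  have li : LinearIndependent (ZMod p) ![v, x, y, z] := by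
    rw [Fintype.linearIndependent_iff]
    intro g hg
    have hsum : g 0 • v + g 1 • x + g 2 • y + g 3 • z = 0 := by
      simpa [Fin.sum_univ_four] using hg
    have h3 := congrArg (fun u => e (e u)) hsum
    have h2 := congrArg (fun u => e u) hsum
    have h4 := congrArg (fun u => f u) hsum
    simp only [map_add, map_smul, map_zero, hvx, hvy, hex, hey, hez, hfx, hfy, hfz,
      smul_zero, add_zero, zero_add, smul_smul] at h2 h3 h4
    have hg0 : g 0 = 0 := by
      rcases smul_eq_zero.mp h3 with h | h
      · exact h
      · exact absurd h hzne
    rw [hg0, zero_smul, zero_add] at h2 h4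
    have hg1 : g 1 = 0 := by
      rcases smul_eq_zero.mp h2 with h | h
      · exact h
      · exact absurd h hzne
    have hg2 : g 2 = 0 := by
      rcases smul_eq_zero.mp h4 with h | h
      · rcases mul_eq_zero.mp h with h' | h'
        · exact h'
        · exact absurd h' hlam0
      · exact absurd h hzne
    rw [hg0, hg1, hg2, zero_smul, zero_smul, zero_smul, zero_add, zero_add, zero_add] at hsum
    have hg3 : g 3 = 0 := by
      rcases smul_eq_zero.mp hsum with h | h
      · exact h
      · exact absurd h hzne
    intro i
    fin_cases i <;> assumption
  have hcard4 : Fintype.card (Fin 4) = finrank (ZMod p) V := by rw [hdim, Fintype.card_fin]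
  set bas : Basis (Fin 4) (ZMod p) V := basisOfLinearIndependentOfCardEqFinrank li hcard4 with hbasdef
  have hbas : ⇑bas = ![v, x, y, z] := coe_basisOfLinearIndependentOfCardEqFinrank li hcard4
  have hb0 : bas 0 = v := by simp [hbas]
  have hb1 : bas 1 = x := by simp [hbas]
  have hb2 : bas 2 = y := by simp [hbas]
  have hb3 : bas 3 = z := by simp [hbas]
  set c : Fin 4 → (V →ₗ[ZMod p] ZMod p) := fun i => bas.coord i with hcdef
  have H : ∀ i j : Fin 4, c j (bas i) = if i = j then 1 else 0 := by
    intro i j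
    simp [hcdef, Basis.coord_apply, Basis.repr_self, Finsupp.single_apply]
  have c0v : c 0 v = 1 := by rw [← hb0]; simpa using H 0 0
  have c1v : c 1 v = 0 := by rw [← hb0]; simpa using H 0 1
  have c2v : c 2 v = 0 := by rw [← hb0]; simpa using H 0 2
  have c3v : c 3 v = 0 := by rw [← hb0]; simpa using H 0 3
  have c0x : c 0 x = 0 := by rw [← hb1]; simpa using H 1 0
  have c1x : c 1 x = 1 := by rw [← hb1]; simpa using H 1 1
  have c2x : c 2 x = 0 := by rw [← hb1]; simpa using H 1 2
  have c3x : c 3 x = 0 := by rw [← hb1]; simpa using H 1 3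
  have c0y : c 0 y = 0 := by rw [← hb2]; simpa using H 2 0
  have c1y : c 1 y = 0 := by rw [← hb2]; simpa using H 2 1
  have c2y : c 2 y = 1 := by rw [← hb2]; simpa using H 2 2
  have c3y : c 3 y = 0 := by rw [← hb2]; simpa using H 2 3
  have c0z : c 0 z = 0 := by rw [← hb3]; simpa using H 3 0
  have c1z : c 1 z = 0 := by rw [← hb3]; simpa using H 3 1
  have c2z : c 2 z = 0 := by rw [← hb3]; simpa using H 3 2
  have c3z : c 3 z = 1 := by rw [← hb3]; simpa using H 3 3
  have hav : ∀ u, a.val u = u + e u := by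
    intro u
    rw [he]
    simp only [LinearMap.sub_apply, Module.End.one_apply]
    abel
  have hbv : ∀ u, b.val u = u + f u := by
    intro u
    rw [hf]
    simp only [LinearMap.sub_apply, Module.End.one_apply]
    abel
  have haval : a.val = LinearMap.id + LinearMap.smulRight (c 0) x + LinearMap.smulRight (c 1) z := by
    apply bas.ext
    intro i
    fin_cases i <;>
      simp [hb0, hb1, hb2, hb3, hav, hvx, hex, hey, hez, LinearMap.add_apply,
        LinearMap.smulRight_apply, c0v, c1v, c0x, c1x, c0y, c1y, c0z, c1z]
  have hbval : b.val = LinearMap.id + LinearMap.smulRight (c 0) y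
      + LinearMap.smulRight (c 2) (lam • z) := by
    apply bas.ext
    intro i
    fin_cases i <;>
      simp [hb0, hb1, hb2, hb3, hbv, hvy, hfx, hfy, hfz, LinearMap.add_apply,
        LinearMap.smulRight_apply, c0v, c2v, c0x, c2x, c0y, c2y, c0z, c2z]
  -- coordinates of images
  have ca0 : ∀ u, c 0 (a.val u) = c 0 u := by
    intro u
    conv_lhs => rw [haval]
    simp [LinearMap.add_apply, LinearMap.smulRight_apply, map_add, map_smul, c0x, c0z,
      smul_eq_mul]
  have ca1 : ∀ u, c 1 (a.val u) = c 1 u + c 0 u := by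
    intro u
    conv_lhs => rw [haval]
    simp [LinearMap.add_apply, LinearMap.smulRight_apply, map_add, map_smul, c1x, c1z,
      smul_eq_mul]
  have ca2 : ∀ u, c 2 (a.val u) = c 2 u := by
    intro u
    conv_lhs => rw [haval]
    simp [LinearMap.add_apply, LinearMap.smulRight_apply, map_add, map_smul, c2x, c2z,
      smul_eq_mul]
  have ca3 : ∀ u, c 3 (a.val u) = c 3 u + c 1 u := by
    intro u
    conv_lhs => rw [haval]
    simp [LinearMap.add_apply, LinearMap.smulRight_apply, map_add, map_smul, c3x, c3z,
      smul_eq_mul]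
  have cb0 : ∀ u, c 0 (b.val u) = c 0 u := by
    intro u
    conv_lhs => rw [hbval]
    simp [LinearMap.add_apply, LinearMap.smulRight_apply, map_add, map_smul, c0y, c0z,
      smul_eq_mul]
  have cb1 : ∀ u, c 1 (b.val u) = c 1 u := by
    intro u
    conv_lhs => rw [hbval]
    simp [LinearMap.add_apply, LinearMap.smulRight_apply, map_add, map_smul, c1y, c1z,
      smul_eq_mul]
  have cb2 : ∀ u, c 2 (b.val u) = c 2 u + c 0 u := by
    intro u
    conv_lhs => rw [hbval]
    simp [LinearMap.add_apply, LinearMap.smulRight_apply, map_add, map_smul, c2y, c2z,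
      smul_eq_mul]
  have cb3 : ∀ u, c 3 (b.val u) = c 3 u + c 2 u * lam := by
    intro u
    conv_lhs => rw [hbval]
    simp [LinearMap.add_apply, LinearMap.smulRight_apply, map_add, map_smul, c3y, c3z,
      smul_eq_mul]
  -- the quadratic form
  set Φ : V →ₗ[ZMod p] V →ₗ[ZMod p] ZMod p :=
    LinearMap.smulRight (c 0) (c 1 + lam • c 2 + (2 : ZMod p) • c 3)
      - LinearMap.smulRight (c 1) (c 1) - lam • LinearMap.smulRight (c 2) (c 2) with hΦdef
  have hΦ : ∀ u w, Φ u w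
      = c 0 u * (c 1 w + lam * c 2 w + 2 * c 3 w) - c 1 u * c 1 w - lam * (c 2 u * c 2 w) := by
    intro u w
    rw [hΦdef]
    simp [LinearMap.sub_apply, LinearMap.add_apply, LinearMap.smul_apply,
      LinearMap.smulRight_apply, smul_eq_mul]
    ring
  have hq : ∀ u, (LinearMap.BilinMap.toQuadraticMap Φ) u
      = c 0 u * (c 1 u + lam * c 2 u + 2 * c 3 u) - c 1 u * c 1 u - lam * (c 2 u * c 2 u) :=
    fun u => by rw [LinearMap.BilinMap.toQuadraticMap_apply, hΦ]
  have htwo : (2 : ZMod p) ≠ 0 := by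
    intro h
    have hd : p ∣ 2 := by
      have h2 : ((2 : ℕ) : ZMod p) = 0 := by exact_mod_cast h
      exact (ZMod.natCast_eq_zero_iff 2 p).mp h2
    have hle := Nat.le_of_dvd (by norm_num) hd
    have := Nat.odd_iff.mp hodd
    omega
  refine ⟨LinearMap.BilinMap.toQuadraticMap Φ, ?_, ?_, ?_, ?_, ?_⟩
  · -- nondegeneracy
    intro u hu
    have hpol : ∀ w, Φ u w + Φ w u = 0 := by
      intro w
      have h := hu w
      rw [hq, hq, hq] at h
      simp only [map_add] at h
      rw [hΦ, hΦ]
      linear_combination h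
    have e1 := hpol z
    rw [hΦ, hΦ, c0z, c1z, c2z, c3z] at e1
    have hc0 : c 0 u = 0 := by
      rcases mul_eq_zero.mp (show (2 : ZMod p) * c 0 u = 0 by linear_combination e1) with h | h
      · exact absurd h htwo
      · exact h
    have e2 := hpol x
    rw [hΦ, hΦ, c0x, c1x, c2x, c3x] at e2
    have hc1 : c 1 u = 0 := by
      rcases mul_eq_zero.mp (show (2 : ZMod p) * c 1 u = 0 by
        linear_combination hc0 - e2) with h | h
      · exact absurd h htwo
      · exact h
    have e3 := hpol y
    rw [hΦ, hΦ, c0y, c1y, c2y, c3y] at e3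
    have hc2 : c 2 u = 0 := by
      have h5 : lam * ((2 : ZMod p) * c 2 u) = 0 := by linear_combination lam * hc0 - e3
      rcases mul_eq_zero.mp h5 with h | h
      · exact absurd h hlam0
      · rcases mul_eq_zero.mp h with h' | h'
        · exact absurd h' htwo
        · exact h'
    have e4 := hpol v
    rw [hΦ, hΦ, c0v, c1v, c2v, c3v] at e4
    have hc3 : c 3 u = 0 := by
      rcases mul_eq_zero.mp (show (2 : ZMod p) * c 3 u = 0 by
        linear_combination e4 - hc1 - lam * hc2) with h | h
      · exact absurd h htwo
      · exact h
    rw [bas.ext_elem_iff]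
    intro i
    rw [map_zero, Finsupp.zero_apply]
    have hrc : ∀ j : Fin 4, bas.repr u j = c j u := fun j => (bas.coord_apply j u).symm
    rw [hrc i]
    fin_cases i
    exacts [hc0, hc1, hc2, hc3]
  · -- a-invariance
    intro u
    rw [hq, hq, ca0, ca1, ca2, ca3]
    ring
  · -- b-invariance
    intro u
    rw [hq, hq, cb0, cb1, cb2, cb3]
    ring
  · -- v is singular
    rw [hq, c0v, c1v, c2v, c3v]
    ring
  · -- the common kernel is singular
    intro w hw
    rw [← hspan] at hw
    obtain ⟨t, rfl⟩ := Submodule.mem_span_singleton.mp hw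
    rw [hq]
    simp only [map_smul, smul_eq_mul, c0z, c1z, c2z]
    ring
end
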